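/- Comma-propagated universal arrows, ascending case: let J be a small category, let G : D ⥤ (J ⥤ C) be a functor, and let (d, g) be a universal arrow from an object c of J ⥤ C to G (i.e., g : c ⟶ G d and the pair is initial among structured arrows from c to G). Then the pair consisting of the object L.obj(𝟙_d) of J ⥤ Arrow C and the morphism L.map(g, g) : L.obj(𝟙_c) ⟶ (Ĝ ⋙ L).obj(𝟙_d) is a universal arrow from L.obj(𝟙_c) to the comma-propagated functor Ĝ ⋙ L : Arrow D ⥤ (J ⥤ Arrow C). -/

import Mathlib

open CategoryTheory

/-- The modulator functor `L : Arrow (J ⥤ C) ⥤ (J ⥤ Arrow C)`. -/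
def modulatorL (J : Type u₁) [SmallCategory J] (C : Type u₂) [Category.{v₂} C] :
    Arrow (J ⥤ C) ⥤ (J ⥤ Arrow C) where
  obj h :=
    { obj := fun j => Arrow.mk (h.hom.app j)
      map := fun {j j'} u =>
        Arrow.homMk' (u := h.left.map u) (v := h.right.map u) (h.hom.naturality u)
      map_id := by intro j; ext <;> simp
      map_comp := by intro _ _ _ u v; ext <;> simp }
  map {h k} g :=
    { app := fun j =>
        Arrow.homMk' (u := g.left.app j) (v := g.right.app j)
          (by exact NatTrans.congr_app (Arrow.w g) j)
      naturality := by intro j j' u; ext; exacts [g.left.naturality u, g.right.naturality u] }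
  map_id := by intro h; ext j <;> simp
  map_comp := by intro _ _ _ f g; ext j <;> rfl

/-- Comma-propagated universal arrows (ascending case): if `(d, g)` is a
universal arrow from `c : J ⥤ C` to `G : D ⥤ (J ⥤ C)`, then
`(L.obj (𝟙 d), L.map (g, g))` is a universal arrow from `L.obj (𝟙 c)` to the
comma-propagated functor `Ĝ ⋙ L : Arrow D ⥤ (J ⥤ Arrow C)`. -/
theorem ascending_universal_arrow
    (J : Type u₁) [SmallCategory J] {C : Type u₂} [Category.{v₂} C]
    {D : Type u₃} [Category.{v₃} D]
    (G : D ⥤ (J ⥤ C)) (c : J ⥤ C) (d : D) (g : c ⟶ G.obj d)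
    (h : Limits.IsInitial (StructuredArrow.mk g)) :
    Nonempty (Limits.IsInitial (StructuredArrow.mk
      (T := G.mapArrow ⋙ modulatorL J C) (Y := Arrow.mk (𝟙 d))
      ((modulatorL J C).map
        (Arrow.homMk (f := Arrow.mk (𝟙 c)) (g := G.mapArrow.obj (Arrow.mk (𝟙 d)))
          (u := g) (v := g) (by simp [Functor.mapArrow]))))) := by
  -- pointwise universal property of (d, g)
  have key : ∀ (e : D) (t : c ⟶ G.obj e), ∃! k : d ⟶ e, g ≫ G.map k = t := by
    intro e t
    refine ⟨(h.to (StructuredArrow.mk t)).right, ?_, ?_⟩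
    · simpa using StructuredArrow.w (h.to (StructuredArrow.mk t))
    · intro k hk
      exact congrArg CommaMorphism.right
        (h.hom_ext (StructuredArrow.homMk (f' := StructuredArrow.mk t) k (by simpa using hk))
          (h.to (StructuredArrow.mk t)))
  choose k hk hku using key
  refine ⟨Limits.IsInitial.ofUniqueHom (fun X => ?_) (fun X m => ?_)⟩
  · -- construction of the unique morphism to X
    refine
      let t₁ : c ⟶ G.obj X.right.left :=
        { app := fun j => (X.hom.app j).left
          naturality := fun j j' u =>
            congrArg CommaMorphism.left (X.hom.naturality u) }
      let t₂ : c ⟶ G.obj X.right.right :=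
        { app := fun j => (X.hom.app j).right
          naturality := fun j j' u =>
            congrArg CommaMorphism.right (X.hom.naturality u) }
      StructuredArrow.homMk
        (Arrow.homMk (u := k X.right.left t₁) (v := k X.right.right t₂) ?_) ?_
    · -- 𝟙 d ≫ k₂ = k₁ ≫ X.right.hom
      refine Eq.trans ?_ (Category.id_comp (k X.right.right t₂)).symm
      refine hku X.right.right t₂ (k X.right.left t₁ ≫ X.right.hom) ?_
      ext j
      have hw := Arrow.w (X.hom.app j)
      simp only [G.map_comp, ← Category.assoc, NatTrans.comp_app]
      have h1 := NatTrans.congr_app (hk X.right.left t₁) j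
      simp only [NatTrans.comp_app] at h1
      rw [h1]
      exact hw.trans (Category.id_comp _)
    · -- triangle
      ext j
      · exact NatTrans.congr_app (hk X.right.left t₁) j
      · exact NatTrans.congr_app (hk X.right.right t₂) j
  · -- uniqueness
    have h1 : g ≫ G.map m.right.left =
        { app := fun j => (X.hom.app j).left
          naturality := fun j j' u =>
            congrArg CommaMorphism.left (X.hom.naturality u) } := by
      ext j
      exact congrArg CommaMorphism.left (NatTrans.congr_app (StructuredArrow.w m) j)
    have h2 : g ≫ G.map m.right.right =
        { app := fun j => (X.hom.app j).right
          naturality := fun j j' u =>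
            congrArg CommaMorphism.right (X.hom.naturality u) } := by
      ext j
      exact congrArg CommaMorphism.right (NatTrans.congr_app (StructuredArrow.w m) j)
    apply StructuredArrow.hom_ext
    apply CommaMorphism.ext
    · exact hku _ _ _ h1
    · exact hku _ _ _ h2
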